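/- Let $X$ be a finite connected pure 2-dimensional simplicial complex with vertex set $V$, and let $A$ be a nonempty proper subset of $V$ attaining $H(X) = \min \frac{|V|\cdot|F(A,V\setminus A)|}{|A|\cdot|V\setminus A|}$. Let $W$ be the edge set of $X$ and $\delta_{min}$ the minimum number of edges containing a vertex. Then there exists $B \subseteq W$ with $0 < |B| < |W|$ such that $\frac{|E(B, W\setminus B)|}{2} \leq |F(A, V\setminus A)|$, $|A| \leq |B|$, and $|V \setminus A| \leq \frac{2|W \setminus B|}{\delta_{min}}$. -/

import Mathlib

open scoped Classical

/-- The 1-skeleton of a pure simplicial complex given by its top-dimensional faces. -/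
def skeleton {V : Type*} (faces : Finset (Finset V)) : SimpleGraph V where
  Adj u v := u ≠ v ∧ ∃ f ∈ faces, u ∈ f ∧ v ∈ f
  symm := by
    constructor
    rintro u v ⟨h, f, hf, hu, hv⟩
    exact ⟨h.symm, f, hf, hv, hu⟩
  loopless := by
    constructor
    rintro v ⟨h, -⟩
    exact h rfl

/-- Induced graph on a vertex set `A`. -/
def aGraph {V : Type*} (faces : Finset (Finset V)) (A : Finset V) : SimpleGraph V where
  Adj u v := u ≠ v ∧ u ∈ A ∧ v ∈ A ∧ ∃ f ∈ faces, u ∈ f ∧ v ∈ f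
  symm := by
    constructor
    rintro u v ⟨h, hu, hv, f, hf, huf, hvf⟩
    exact ⟨h.symm, hv, hu, f, hf, hvf, huf⟩
  loopless := by
    constructor
    rintro v ⟨h, -⟩
    exact h rfl

/-- crossing faces -/
noncomputable def crs {V : Type*} (faces : Finset (Finset V)) (A : Finset V) : Finset (Finset V) :=
  faces.filter (fun f => (∃ v ∈ f, v ∈ A) ∧ (∃ v ∈ f, v ∉ A))

lemma mem_crs {V : Type*} {faces : Finset (Finset V)} {A : Finset V} {f : Finset V} :
    f ∈ crs faces A ↔ f ∈ faces ∧ (∃ v ∈ f, v ∈ A) ∧ (∃ v ∈ f, v ∉ A) := by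
  rw [crs]
  exact Finset.mem_filter

lemma walk_cross {V : Type*} {faces : Finset (Finset V)} {A : Finset V} :
    ∀ {u v : V}, (skeleton faces).Walk u v → u ∈ A → v ∉ A →
      ∃ f ∈ faces, (∃ x ∈ f, x ∈ A) ∧ ∃ y ∈ f, y ∉ A := by
  intro u v w
  induction w with
  | nil => intro h1 h2; exact absurd h1 h2
  | @cons a b c h p ih =>
    intro ha hc
    by_cases hb : b ∈ A
    · exact ih hb hc
    · obtain ⟨-, f, hf, haf, hbf⟩ := h
      exact ⟨f, hf, ⟨a, haf, ha⟩, ⟨b, hbf, hb⟩⟩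

lemma exists_cross {V : Type*} [Fintype V] {faces : Finset (Finset V)} {A : Finset V}
    (hconn : (skeleton faces).Connected) (hA1 : 0 < A.card) (hA2 : A.card < Fintype.card V) :
    ∃ f ∈ faces, (∃ x ∈ f, x ∈ A) ∧ ∃ y ∈ f, y ∉ A := by
  obtain ⟨u, hu⟩ := Finset.card_pos.mp hA1
  have : A ≠ Finset.univ := by
    intro h; rw [h, Finset.card_univ] at hA2; exact lt_irrefl _ hA2
  obtain ⟨v, hv⟩ : ∃ v, v ∉ A := by
    by_contra h; push_neg at h
    exact this (Finset.eq_univ_iff_forall.mpr h)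
  obtain ⟨w⟩ := hconn.preconnected u v
  exact walk_cross w hu hv

/-- A connected-within-A set injects (minus one vertex) into induced edges. -/
lemma conn_count {V : Type*} [Fintype V] [DecidableEq V] (faces : Finset (Finset V))
    (A : Finset V) (u₀ : V) (hu₀ : u₀ ∈ A)
    (hreach : ∀ v ∈ A, (aGraph faces A).Reachable u₀ v)
    (E : Finset (Finset V)) (hE : ∀ p v : V, (aGraph faces A).Adj p v → {p, v} ∈ E) :
    A.card ≤ E.card + 1 := by
  classical
  set G := aGraph faces A with hG
  have hex : ∀ v ∈ A.erase u₀, ∃ p, G.Adj p v ∧ G.dist u₀ p < G.dist u₀ v := by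
    intro v hv
    obtain ⟨hvne, hvA⟩ := Finset.mem_erase.mp hv
    have hr : G.Reachable u₀ v := hreach v hvA
    obtain ⟨w, hw⟩ := hr.exists_walk_length_eq_dist
    have hne : v ≠ u₀ := hvne
    obtain ⟨p, hadj, q, hq⟩ := SimpleGraph.Walk.exists_eq_cons_of_ne hne w.reverse
    refine ⟨p, hadj.symm, ?_⟩
    have h1 : G.dist u₀ p ≤ q.reverse.length := SimpleGraph.dist_le _
    have h2 : q.reverse.length = q.length := SimpleGraph.Walk.length_reverse _
    have h3 : w.reverse.length = w.length := SimpleGraph.Walk.length_reverse _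
    have h4 : w.reverse.length = q.length + 1 := by rw [hq]; simp
    omega
  set f : V → Finset V := fun v =>
    if h : ∃ p, G.Adj p v ∧ G.dist u₀ p < G.dist u₀ v then {h.choose, v} else ∅ with hf
  have hfspec : ∀ v ∈ A.erase u₀,
      ∃ p, G.Adj p v ∧ G.dist u₀ p < G.dist u₀ v ∧ f v = {p, v} := by
    intro v hv
    have h := hex v hv
    refine ⟨h.choose, h.choose_spec.1, h.choose_spec.2, ?_⟩
    simp only [hf]
    rw [dif_pos h]
  have hinj : Set.InjOn f (A.erase u₀) := by
    intro v hv w hw hvw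
    by_contra hne
    obtain ⟨p, hpadj, hpd, hpf⟩ := hfspec v hv
    obtain ⟨q, hqadj, hqd, hqf⟩ := hfspec w hw
    rw [hpf, hqf] at hvw
    have hvq : v = q := by
      have : v ∈ ({q, w} : Finset V) := by rw [← hvw]; simp
      rcases Finset.mem_insert.mp this with h | h
      · exact h
      · exact absurd (Finset.mem_singleton.mp h) hne
    have hwp : w = p := by
      have : w ∈ ({p, v} : Finset V) := by rw [hvw]; simp
      rcases Finset.mem_insert.mp this with h | h
      · exact h
      · exact absurd (Finset.mem_singleton.mp h) (Ne.symm hne)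
    rw [hwp] at hqd
    rw [hvq] at hpd
    omega
  have hmaps : ∀ v ∈ A.erase u₀, f v ∈ E := by
    intro v hv
    obtain ⟨p, hpadj, -, hpf⟩ := hfspec v hv
    rw [hpf]
    exact hE p v hpadj
  have h1 : (A.erase u₀).card ≤ E.card :=
    Finset.card_le_card_of_injOn f hmaps hinj
  have h2 : (A.erase u₀).card = A.card - 1 := Finset.card_erase_of_mem hu₀
  have h3 : 0 < A.card := Finset.card_pos.mpr ⟨u₀, hu₀⟩
  omega

lemma reach_all {V : Type*} [Fintype V] [DecidableEq V] (faces : Finset (Finset V))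
    (A : Finset V) (hF : 0 < (crs faces A).card) (hA2 : A.card < Fintype.card V)
    (hmin : ∀ A' : Finset V, 0 < A'.card → A'.card < Fintype.card V →
      ((Fintype.card V : ℝ) * ((crs faces A).card : ℝ)) /
        ((A.card : ℝ) * ((Fintype.card V : ℝ) - (A.card : ℝ))) ≤
      ((Fintype.card V : ℝ) * ((crs faces A').card : ℝ)) /
        ((A'.card : ℝ) * ((Fintype.card V : ℝ) - (A'.card : ℝ)))) :
    ∀ u v, u ∈ A → v ∈ A → (aGraph faces A).Reachable u v := by
  classical
  by_contra hcon
  push_neg at hcon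
  obtain ⟨u, v, hu, hv, hnr⟩ := hcon
  set G := aGraph faces A with hG
  set A₁ := A.filter (fun x => G.Reachable u x) with hA₁
  set A₂ := A \ A₁ with hA₂def
  have hu1 : u ∈ A₁ := Finset.mem_filter.mpr ⟨hu, SimpleGraph.Reachable.refl u⟩
  have hv2 : v ∈ A₂ := Finset.mem_sdiff.mpr ⟨hv, by
    intro h
    exact hnr (Finset.mem_filter.mp h).2⟩
  have hsub1 : A₁ ⊆ A := Finset.filter_subset _ _
  have hsub2 : A₂ ⊆ A := Finset.sdiff_subset
  have hsep : ∀ f ∈ faces, ¬ ((∃ x ∈ f, x ∈ A₁) ∧ ∃ y ∈ f, y ∈ A₂) := by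
    rintro f hf ⟨⟨x, hxf, hx1⟩, ⟨y, hyf, hy2⟩⟩
    obtain ⟨hxA, hrx⟩ := Finset.mem_filter.mp hx1
    obtain ⟨hyA, hy1⟩ := Finset.mem_sdiff.mp hy2
    have hxy : x ≠ y := by rintro rfl; exact hy1 hx1
    have hadj : G.Adj x y := ⟨hxy, hxA, hyA, f, hf, hxf, hyf⟩
    exact hy1 (Finset.mem_filter.mpr ⟨hyA, hrx.trans hadj.reachable⟩)
  have hunion : A₁ ∪ A₂ = A := Finset.union_sdiff_of_subset hsub1
  have hdisj : Disjoint A₁ A₂ := Finset.disjoint_sdiff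
  have hcr : crs faces A = crs faces A₁ ∪ crs faces A₂ := by
    ext f
    simp only [crs, Finset.mem_union, Finset.mem_filter]
    constructor
    · rintro ⟨hf, ⟨x, hxf, hxA⟩, ⟨y, hyf, hyA⟩⟩
      have hx12 : x ∈ A₁ ∨ x ∈ A₂ := by
        rw [← Finset.mem_union, hunion]; exact hxA
      rcases hx12 with hx | hx
      · exact Or.inl ⟨hf, ⟨x, hxf, hx⟩, ⟨y, hyf, fun h => hyA (hsub1 h)⟩⟩
      · exact Or.inr ⟨hf, ⟨x, hxf, hx⟩, ⟨y, hyf, fun h => hyA (hsub2 h)⟩⟩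
    · rintro (⟨hf, ⟨x, hxf, hx⟩, ⟨y, hyf, hy⟩⟩ | ⟨hf, ⟨x, hxf, hx⟩, ⟨y, hyf, hy⟩⟩)
      · refine ⟨hf, ⟨x, hxf, hsub1 hx⟩, ⟨y, hyf, fun hyA => ?_⟩⟩
        have : y ∈ A₁ ∪ A₂ := by rw [hunion]; exact hyA
        rcases Finset.mem_union.mp this with h | h
        · exact hy h
        · exact hsep f hf ⟨⟨x, hxf, hx⟩, ⟨y, hyf, h⟩⟩
      · refine ⟨hf, ⟨x, hxf, hsub2 hx⟩, ⟨y, hyf, fun hyA => ?_⟩⟩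
        have : y ∈ A₁ ∪ A₂ := by rw [hunion]; exact hyA
        rcases Finset.mem_union.mp this with h | h
        · exact hsep f hf ⟨⟨y, hyf, h⟩, ⟨x, hxf, hx⟩⟩
        · exact hy h
  have hcrdisj : Disjoint (crs faces A₁) (crs faces A₂) := by
    rw [Finset.disjoint_left]
    rintro f hf1 hf2
    simp only [crs, Finset.mem_filter] at hf1 hf2
    exact hsep f hf1.1 ⟨hf1.2.1, hf2.2.1⟩
  have hcard : (crs faces A).card = (crs faces A₁).card + (crs faces A₂).card := by
    rw [hcr, Finset.card_union_of_disjoint hcrdisj]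
  -- numeric setup
  have ha1pos : 0 < A₁.card := Finset.card_pos.mpr ⟨u, hu1⟩
  have ha2pos : 0 < A₂.card := Finset.card_pos.mpr ⟨v, hv2⟩
  have hale : A₁.card + A₂.card = A.card := by
    rw [← Finset.card_union_of_disjoint hdisj, hunion]
  have ha1lt : A₁.card < Fintype.card V := lt_of_le_of_lt (Finset.card_le_card hsub1) hA2
  have ha2lt : A₂.card < Fintype.card V := lt_of_le_of_lt (Finset.card_le_card hsub2) hA2
  have e1 := hmin A₁ ha1pos ha1lt
  have e2 := hmin A₂ ha2pos ha2lt
  set n : ℝ := (Fintype.card V : ℝ) with hn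
  set a : ℝ := (A.card : ℝ)
  set a1 : ℝ := (A₁.card : ℝ)
  set a2 : ℝ := (A₂.card : ℝ)
  set c : ℝ := ((crs faces A).card : ℝ)
  set c1 : ℝ := ((crs faces A₁).card : ℝ)
  set c2 : ℝ := ((crs faces A₂).card : ℝ)
  have hcR : c = c1 + c2 := by
    have := congrArg (fun k : ℕ => (k : ℝ)) hcard
    push_cast at this
    exact this
  have ha1R : (1:ℝ) ≤ a1 := Nat.one_le_cast.mpr ha1pos
  have ha2R : (1:ℝ) ≤ a2 := Nat.one_le_cast.mpr ha2pos
  have haR : a = a1 + a2 := by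
    have := congrArg (fun k : ℕ => (k : ℝ)) hale
    push_cast at this
    exact this.symm
  have hcpos : (0:ℝ) < c := Nat.cast_pos.mpr hF
  have hna : a < n := Nat.cast_lt.mpr hA2
  have hna1 : a1 < n := Nat.cast_lt.mpr ha1lt
  have hna2 : a2 < n := Nat.cast_lt.mpr ha2lt
  have hd : (0:ℝ) < a * (n - a) := by
    have : (0:ℝ) < a := by linarith
    nlinarith
  have hd1 : (0:ℝ) < a1 * (n - a1) := by nlinarith
  have hd2 : (0:ℝ) < a2 * (n - a2) := by nlinarith
  rw [div_le_div_iff₀ hd hd1] at e1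
  rw [div_le_div_iff₀ hd hd2] at e2
  have hnpos : (0:ℝ) < n := by linarith
  have key : n * c * (a1*(n-a1) + a2*(n-a2)) ≤ n * c * (a * (n-a)) := by
    have hadd : n*c*(a1*(n-a1)) + n*c*(a2*(n-a2)) ≤ n*c1*(a*(n-a)) + n*c2*(a*(n-a)) :=
      add_le_add e1 e2
    calc n*c*(a1*(n-a1)+a2*(n-a2)) = n*c*(a1*(n-a1)) + n*c*(a2*(n-a2)) := by ring
    _ ≤ n*c1*(a*(n-a)) + n*c2*(a*(n-a)) := hadd
    _ = n*c*(a*(n-a)) := by rw [hcR]; ring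
  have key2 : a1*(n-a1) + a2*(n-a2) ≤ a*(n-a) :=
    le_of_mul_le_mul_left key (mul_pos hnpos hcpos)
  rw [haR] at key2
  have hprod : (1:ℝ) ≤ a1 * a2 := by nlinarith
  nlinarith [key2, hprod]

set_option maxHeartbeats 2000000

theorem stmt12 {V : Type*} [Fintype V] [DecidableEq V]
    (faces : Finset (Finset V))
    (hpure : ∀ f ∈ faces, f.card = 3)
    (hcover : ∀ v : V, ∃ f ∈ faces, v ∈ f)
    (hconn : (skeleton faces).Connected)
    (W : Finset (Finset V))
    (hW : W = ((Finset.univ : Finset V).powersetCard 2).filter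
      (fun e => ∃ f ∈ faces, e ⊆ f))
    (δmin : ℕ)
    (hδ : IsLeast {m : ℕ | ∃ v : V, m = (W.filter (fun e => v ∈ e)).card} δmin)
    (A : Finset V) (hA1 : 0 < A.card) (hA2 : A.card < Fintype.card V)
    (hmin : ∀ A' : Finset V, 0 < A'.card → A'.card < Fintype.card V →
      ((Fintype.card V : ℝ) *
          ((faces.filter (fun f => (∃ v ∈ f, v ∈ A) ∧ (∃ v ∈ f, v ∉ A))).card : ℝ)) /
        ((A.card : ℝ) * ((Fintype.card V : ℝ) - (A.card : ℝ))) ≤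
      ((Fintype.card V : ℝ) *
          ((faces.filter (fun f => (∃ v ∈ f, v ∈ A') ∧ (∃ v ∈ f, v ∉ A'))).card : ℝ)) /
        ((A'.card : ℝ) * ((Fintype.card V : ℝ) - (A'.card : ℝ)))) :
    ∃ B ⊆ W, 0 < B.card ∧ B.card < W.card ∧
      (((B ×ˢ (W \ B)).filter
          (fun p => p.1 ≠ p.2 ∧ ∃ f ∈ faces, p.1 ⊆ f ∧ p.2 ⊆ f)).card : ℝ) / 2 ≤
        ((faces.filter (fun f => (∃ v ∈ f, v ∈ A) ∧ (∃ v ∈ f, v ∉ A))).card : ℝ) ∧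
      A.card ≤ B.card ∧
      ((Aᶜ.card : ℝ)) ≤ 2 * ((W \ B).card : ℝ) / (δmin : ℝ) := by
  classical
  have hcrseq : ∀ A' : Finset V,
      faces.filter (fun f => (∃ v ∈ f, v ∈ A') ∧ ∃ v ∈ f, v ∉ A') = crs faces A' := by
    intro A'
    apply Finset.ext
    intro f
    rw [mem_crs, Finset.mem_filter]
  simp only [hcrseq] at hmin ⊢
  -- pairs inside faces are edges
  have hpair : ∀ f ∈ faces, ∀ x ∈ f, ∀ y ∈ f, x ≠ y → ({x, y} : Finset V) ∈ W := by
    intro f hf x hx y hy hxy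
    rw [hW, Finset.mem_filter, Finset.mem_powersetCard]
    refine ⟨⟨Finset.subset_univ _, ?_⟩, f, hf, ?_⟩
    · rw [Finset.card_insert_of_notMem (by simp [hxy]), Finset.card_singleton]
    · intro z hz
      rcases Finset.mem_insert.mp hz with rfl | hz
      · exact hx
      · rw [Finset.mem_singleton.mp hz]; exact hy
  have hcard2 : ∀ e ∈ W, e.card = 2 := by
    intro e he
    rw [hW, Finset.mem_filter, Finset.mem_powersetCard] at he
    exact he.1.2
  -- a crossing face exists
  obtain ⟨f₀, hf₀, ⟨x, hxf₀, hxA⟩, ⟨y, hyf₀, hyA⟩⟩ := exists_cross hconn hA1 hA2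
  have hxy : x ≠ y := by rintro rfl; exact hyA hxA
  have hF : 0 < (crs faces A).card := by
    apply Finset.card_pos.mpr
    exact ⟨f₀, mem_crs.mpr ⟨hf₀, ⟨x, hxf₀, hxA⟩, ⟨y, hyf₀, hyA⟩⟩⟩
  -- the chosen mixed edge
  set e₀ : Finset V := {x, y} with he₀def
  have he₀W : e₀ ∈ W := hpair f₀ hf₀ x hxf₀ y hyf₀ hxy
  have he₀nsub : ¬ e₀ ⊆ A := fun h => hyA (h (by simp [he₀def]))
  -- a second mixed edge
  obtain ⟨z, hzf₀, hze₀⟩ : ∃ z ∈ f₀, z ∉ e₀ := by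
    by_contra h
    push_neg at h
    have : f₀.card ≤ e₀.card := Finset.card_le_card h
    have h2 : e₀.card = 2 := hcard2 e₀ he₀W
    rw [hpure f₀ hf₀, h2] at this
    omega
  have hzx : z ≠ x := fun h => hze₀ (by simp [he₀def, h])
  have hzy : z ≠ y := fun h => hze₀ (by simp [he₀def, h])
  set M : Finset (Finset V) :=
    W.filter (fun e => (∃ v ∈ e, v ∈ A) ∧ (∃ v ∈ e, v ∉ A)) with hMdef
  have he₀M : e₀ ∈ M := by
    refine Finset.mem_filter.mpr ⟨he₀W, ⟨x, by simp [he₀def], hxA⟩, ⟨y, by simp [he₀def], hyA⟩⟩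
  obtain ⟨e₁, he₁M, he₁ne⟩ : ∃ e₁ ∈ M, e₁ ≠ e₀ := by
    by_cases hzA : z ∈ A
    · refine ⟨{z, y}, Finset.mem_filter.mpr ⟨hpair f₀ hf₀ z hzf₀ y hyf₀ hzy,
        ⟨z, by simp, hzA⟩, ⟨y, by simp, hyA⟩⟩, ?_⟩
      intro h
      have : x ∈ ({z, y} : Finset V) := by rw [h]; simp [he₀def]
      rcases Finset.mem_insert.mp this with h' | h'
      · exact hzx h'.symm
      · exact hxy (Finset.mem_singleton.mp h')
    · refine ⟨{x, z}, Finset.mem_filter.mpr ⟨hpair f₀ hf₀ x hxf₀ z hzf₀ (Ne.symm hzx),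
        ⟨x, by simp, hxA⟩, ⟨z, by simp, hzA⟩⟩, ?_⟩
      intro h
      have : y ∈ ({x, z} : Finset V) := by rw [h]; simp [he₀def]
      rcases Finset.mem_insert.mp this with h' | h'
      · exact hxy h'.symm
      · exact hzy (Finset.mem_singleton.mp h').symm
  -- definition of B
  set E : Finset (Finset V) := W.filter (fun e => e ⊆ A) with hEdef
  set B : Finset (Finset V) := E ∪ {e₀} with hBdef
  have hBW : B ⊆ W := by
    apply Finset.union_subset (Finset.filter_subset _ _)
    simpa using he₀W
  have he₀B : e₀ ∈ B := Finset.mem_union_right _ (Finset.mem_singleton_self e₀)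
  have he₀nE : e₀ ∉ E := fun h => he₀nsub (Finset.mem_filter.mp h).2
  have hBcard : B.card = E.card + 1 := by
    rw [hBdef, Finset.card_union_of_disjoint (by simpa using he₀nE)]
    simp
  have hBpos : 0 < B.card := Finset.card_pos.mpr ⟨e₀, he₀B⟩
  -- e₁ is not in B
  have hmixed_not_B : ∀ e ∈ M, e ≠ e₀ → e ∉ B := by
    intro e heM hene heB
    rcases Finset.mem_union.mp heB with h | h
    · obtain ⟨-, -, ⟨v', hv'e, hv'A⟩⟩ := Finset.mem_filter.mp heM
      exact hv'A ((Finset.mem_filter.mp h).2 hv'e)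
    · exact hene (Finset.mem_singleton.mp h)
  have he₁W : e₁ ∈ W := (Finset.mem_filter.mp he₁M).1
  have he₁nB : e₁ ∉ B := hmixed_not_B e₁ he₁M he₁ne
  have hBlt : B.card < W.card :=
    Finset.card_lt_card (Finset.ssubset_iff_of_subset hBW |>.mpr ⟨e₁, he₁W, he₁nB⟩)
  -- |A| ≤ |B|
  obtain ⟨u₀, hu₀⟩ := Finset.card_pos.mp hA1
  have hreach := reach_all faces A hF hA2 hmin
  have hAB : A.card ≤ B.card := by
    rw [hBcard]
    apply conn_count faces A u₀ hu₀ (fun v hv => hreach u₀ v hu₀ hv)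
    rintro p v ⟨hpv, hpA, hvA, f, hf, hpf, hvf⟩
    exact Finset.mem_filter.mpr ⟨hpair f hf p hpf v hvf hpv, by
      intro w hw
      rcases Finset.mem_insert.mp hw with rfl | hw
      · exact hpA
      · rw [Finset.mem_singleton.mp hw]; exact hvA⟩
  refine ⟨B, hBW, hBpos, hBlt, ?_, hAB, ?_⟩
  · -- condition 1 : edge-boundary vs crossing faces
    set S := (B ×ˢ (W \ B)).filter
        (fun p => p.1 ≠ p.2 ∧ ∃ f ∈ faces, p.1 ⊆ f ∧ p.2 ⊆ f) with hSdef
    have hmem : ∀ p ∈ S, p.1 ∪ p.2 ∈ crs faces A := by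
      rintro ⟨eb, ec⟩ hp
      obtain ⟨hprod, hne, f, hf, h1, h2⟩ := Finset.mem_filter.mp hp
      obtain ⟨hb, hc⟩ := Finset.mem_product.mp hprod
      have hcW : ec ∈ W := (Finset.mem_sdiff.mp hc).1
      have hcB : ec ∉ B := (Finset.mem_sdiff.mp hc).2
      have hcb2 : eb.card = 2 := hcard2 eb (hBW hb)
      have hcc2 : ec.card = 2 := hcard2 ec hcW
      have hsub : eb ∪ ec ⊆ f := Finset.union_subset h1 h2
      have hnsub : ¬ ec ⊆ eb := by
        intro h
        exact hne (Finset.eq_of_subset_of_card_le h (by omega)).symm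
      obtain ⟨t, htc, htb⟩ := Finset.not_subset.mp hnsub
      have h3 : 3 ≤ (eb ∪ ec).card := by
        have : insert t eb ⊆ eb ∪ ec := by
          apply Finset.insert_subset (Finset.mem_union_right _ htc) Finset.subset_union_left
        have := Finset.card_le_card this
        rw [Finset.card_insert_of_notMem htb] at this
        omega
      have huf : eb ∪ ec = f :=
        Finset.eq_of_subset_of_card_le hsub (by rw [hpure f hf]; exact h3)
      rw [huf, mem_crs]
      refine ⟨hf, ?_, ?_⟩
      · rcases Finset.mem_union.mp hb with h | h
        · obtain ⟨-, hsubA⟩ := Finset.mem_filter.mp h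
          have : eb.Nonempty := Finset.card_pos.mp (by omega)
          obtain ⟨w, hw⟩ := this
          exact ⟨w, huf ▸ Finset.mem_union_left _ hw, hsubA hw⟩
        · rw [Finset.mem_singleton.mp h] at h1
          exact ⟨x, h1 (by simp [he₀def]), hxA⟩
      · have : ¬ ec ⊆ A := by
          intro hsubA
          exact hcB (Finset.mem_union_left _ (Finset.mem_filter.mpr ⟨hcW, hsubA⟩))
        obtain ⟨w, hw, hwA⟩ := Finset.not_subset.mp this
        exact ⟨w, huf ▸ Finset.mem_union_right _ hw, hwA⟩
    have hfiber := Finset.card_eq_sum_card_fiberwise hmem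
    have hbound : ∀ g ∈ crs faces A,
        (S.filter (fun p => p.1 ∪ p.2 = g)).card ≤ 2 := by
      intro g hg
      have hgf : g ∈ faces := (mem_crs.mp hg).1
      set Bg := B.filter (fun e => e ⊆ g) with hBg
      set Cg := (W \ B).filter (fun e => e ⊆ g) with hCg
      have hsub : S.filter (fun p => p.1 ∪ p.2 = g) ⊆ Bg ×ˢ Cg := by
        rintro ⟨eb, ec⟩ hp
        obtain ⟨hpS, hpg⟩ := Finset.mem_filter.mp hp
        obtain ⟨hprod, -⟩ := Finset.mem_filter.mp hpS
        obtain ⟨hb, hc⟩ := Finset.mem_product.mp hprod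
        simp only [] at hpg
        refine Finset.mem_product.mpr ⟨Finset.mem_filter.mpr ⟨hb, ?_⟩,
          Finset.mem_filter.mpr ⟨hc, ?_⟩⟩
        · rw [← hpg]; exact Finset.subset_union_left
        · rw [← hpg]; exact Finset.subset_union_right
      have h1 : (S.filter (fun p => p.1 ∪ p.2 = g)).card ≤ Bg.card * Cg.card := by
        calc _ ≤ (Bg ×ˢ Cg).card := Finset.card_le_card hsub
        _ = Bg.card * Cg.card := Finset.card_product _ _
      have hdisjg : Disjoint Bg Cg := by
        apply Finset.disjoint_filter_filter
        exact Finset.disjoint_sdiff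
      have hsubP : Bg ∪ Cg ⊆ g.powersetCard 2 := by
        intro e he
        have heW : e ∈ W := by
          rcases Finset.mem_union.mp he with h | h
          · exact hBW (Finset.mem_filter.mp h).1
          · exact (Finset.mem_sdiff.mp (Finset.mem_filter.mp h).1).1
        have heg : e ⊆ g := by
          rcases Finset.mem_union.mp he with h | h
          · exact (Finset.mem_filter.mp h).2
          · exact (Finset.mem_filter.mp h).2
        exact Finset.mem_powersetCard.mpr ⟨heg, hcard2 e heW⟩
      have hP3 : (g.powersetCard 2).card = 3 := by
        rw [Finset.card_powersetCard, hpure g hgf]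
        norm_num
      have hsum3 : Bg.card + Cg.card ≤ 3 := by
        rw [← Finset.card_union_of_disjoint hdisjg, ← hP3]
        exact Finset.card_le_card hsubP
      have : ∀ k m : ℕ, k + m ≤ 3 → k * m ≤ 2 := by
        intro k m h
        have hk : k ≤ 3 := by omega
        interval_cases k <;> omega
      calc (S.filter (fun p => p.1 ∪ p.2 = g)).card ≤ Bg.card * Cg.card := h1
      _ ≤ 2 := this _ _ hsum3
    have hS2 : S.card ≤ 2 * (crs faces A).card := by
      rw [hfiber]
      calc ∑ g ∈ crs faces A, (S.filter (fun p => p.1 ∪ p.2 = g)).card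
          ≤ ∑ _g ∈ crs faces A, 2 := Finset.sum_le_sum hbound
      _ = 2 * (crs faces A).card := by rw [Finset.sum_const, smul_eq_mul, mul_comm]
    show ((S.card : ℝ)) / 2 ≤ ((crs faces A).card : ℝ)
    rw [div_le_iff₀ (by norm_num : (0:ℝ) < 2)]
    calc (S.card : ℝ) ≤ (2 * (crs faces A).card : ℕ) := by exact_mod_cast hS2
    _ = ((crs faces A).card : ℝ) * 2 := by push_cast; ring
  · -- condition 3
    have hδpos : 0 < δmin := by
      obtain ⟨v₀, hv₀⟩ := hδ.1
      obtain ⟨f, hf, hv₀f⟩ := hcover v₀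
      obtain ⟨u, huf, hune⟩ : ∃ u ∈ f, u ≠ v₀ := by
        by_contra h
        push_neg at h
        have : f ⊆ {v₀} := fun w hw => Finset.mem_singleton.mpr (h w hw)
        have := Finset.card_le_card this
        rw [hpure f hf] at this
        simp at this
      rw [hv₀]
      apply Finset.card_pos.mpr
      refine ⟨{v₀, u}, Finset.mem_filter.mpr ⟨hpair f hf v₀ hv₀f u huf (Ne.symm hune), by simp⟩⟩
    have hstep1 : δmin * Aᶜ.card ≤ ∑ v ∈ Aᶜ, (W.filter (fun e => v ∈ e)).card := by
      have := Finset.card_nsmul_le_sum Aᶜ (fun v => (W.filter (fun e => v ∈ e)).card) δmin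
        (fun v _ => hδ.2 ⟨v, rfl⟩)
      rw [smul_eq_mul] at this
      linarith [this]
    have hswap : ∑ v ∈ Aᶜ, (W.filter (fun e => v ∈ e)).card
        = ∑ e ∈ W, (Aᶜ.filter (fun v => v ∈ e)).card := by
      simp_rw [Finset.card_filter]
      exact Finset.sum_comm
    have hWsplit : W = B ∪ (W \ B) := (Finset.union_sdiff_of_subset hBW).symm
    have hdisjB : Disjoint B (W \ B) := Finset.disjoint_sdiff
    have hsumB : ∑ e ∈ B, (Aᶜ.filter (fun v => v ∈ e)).card ≤ 1 := by
      rw [hBdef, Finset.sum_union (by simpa using he₀nE)]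
      have h0 : ∑ e ∈ E, (Aᶜ.filter (fun v => v ∈ e)).card = 0 := by
        apply Finset.sum_eq_zero
        intro e he
        rw [Finset.card_eq_zero, Finset.filter_eq_empty_iff]
        intro v hv hve
        exact (Finset.mem_compl.mp hv) ((Finset.mem_filter.mp he).2 hve)
      rw [h0, Finset.sum_singleton]
      have hsy : Aᶜ.filter (fun v => v ∈ e₀) ⊆ {y} := by
        intro v hv
        obtain ⟨hvc, hve⟩ := Finset.mem_filter.mp hv
        rcases Finset.mem_insert.mp (he₀def ▸ hve) with rfl | h
        · exact absurd hxA (Finset.mem_compl.mp hvc)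
        · exact h
      simpa using Finset.card_le_card hsy
    have hstep2 : ∀ e ∈ W \ B, (Aᶜ.filter (fun v => v ∈ e)).card
        + (if e ∈ M then 1 else 0) ≤ 2 := by
      intro e he
      have heW := (Finset.mem_sdiff.mp he).1
      have hfsub : Aᶜ.filter (fun v => v ∈ e) ⊆ e := fun v hv => (Finset.mem_filter.mp hv).2
      by_cases hM : e ∈ M
      · obtain ⟨-, ⟨w, hwe, hwA⟩, -⟩ := Finset.mem_filter.mp hM
        have hss : Aᶜ.filter (fun v => v ∈ e) ⊆ e.erase w := by
          intro v hv
          obtain ⟨hvc, hve⟩ := Finset.mem_filter.mp hv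
          exact Finset.mem_erase.mpr ⟨fun h => (Finset.mem_compl.mp hvc) (h ▸ hwA), hve⟩
        have hc := Finset.card_le_card hss
        rw [Finset.card_erase_of_mem hwe, hcard2 e heW] at hc
        simp only [hM, if_true]
        omega
      · have hc := Finset.card_le_card hfsub
        rw [hcard2 e heW] at hc
        simp only [hM, if_false]
        omega
    have hsumC : ∑ e ∈ W \ B, (Aᶜ.filter (fun v => v ∈ e)).card + (M.erase e₀).card
        ≤ 2 * (W \ B).card := by
      have h1 : M.erase e₀ ⊆ (W \ B).filter (fun e => e ∈ M) := by
        intro e he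
        obtain ⟨hene, heM⟩ := Finset.mem_erase.mp he
        exact Finset.mem_filter.mpr ⟨Finset.mem_sdiff.mpr
          ⟨(Finset.mem_filter.mp heM).1, hmixed_not_B e heM hene⟩, heM⟩
      have h2 := Finset.card_le_card h1
      rw [Finset.card_filter] at h2
      have h3 : ∑ e ∈ W \ B, ((Aᶜ.filter (fun v => v ∈ e)).card + (if e ∈ M then 1 else 0))
          ≤ ∑ _e ∈ W \ B, 2 := Finset.sum_le_sum hstep2
      rw [Finset.sum_add_distrib, Finset.sum_const, smul_eq_mul, mul_comm] at h3
      omega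
    have he₁M' : e₁ ∈ M.erase e₀ := Finset.mem_erase.mpr ⟨he₁ne, he₁M⟩
    have hMerase : 1 ≤ (M.erase e₀).card := Finset.card_pos.mpr ⟨e₁, he₁M'⟩
    have hkey : δmin * Aᶜ.card ≤ 2 * (W \ B).card := by
      have hsum_split := Finset.sum_union hdisjB (f := fun e => (Aᶜ.filter (fun v => v ∈ e)).card)
      rw [← hWsplit] at hsum_split
      linarith [hstep1, hswap, hsum_split, hsumB, hsumC, hMerase]
    rw [le_div_iff₀ (by exact_mod_cast hδpos : (0:ℝ) < (δmin : ℝ))]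
    calc (Aᶜ.card : ℝ) * δmin = ((δmin * Aᶜ.card : ℕ) : ℝ) := by push_cast; ring
    _ ≤ ((2 * (W \ B).card : ℕ) : ℝ) := by exact_mod_cast hkey
    _ = 2 * ((W \ B).card : ℝ) := by push_cast; ring
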